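/- Let n ≥ 0 and r ≥ 0 be integers, and suppose A, B ⊆ H_r(n). Then |A + B| ≥ 9^(−r)·|A|·|B|. -/

import Mathlib

open Finset Pointwise

abbrev F2 (n : ℕ) := Fin n → ZMod 2

/-- The standard basis vector `e i` of `F_2^n`. -/
def stdBasis {n : ℕ} (i : Fin n) : F2 n := Pi.single i 1

/-- `A` is a downset: whenever `x i = 0` and `x + e i ∈ A`, also `x ∈ A`. -/
def IsDownset {n : ℕ} (A : Finset (F2 n)) : Prop :=
  ∀ x : F2 n, ∀ i : Fin n, x i = 0 → x + stdBasis i ∈ A → x ∈ A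

/-- `A` is shift-minimal: whenever `i < j`, `x i = x j = 0` and `x + e j ∈ A`,
also `x + e i ∈ A`. -/
def IsShiftMinimal {n : ℕ} (A : Finset (F2 n)) : Prop :=
  ∀ x : F2 n, ∀ i j : Fin n, i < j → x i = 0 → x j = 0 →
    x + stdBasis j ∈ A → x + stdBasis i ∈ A

/-- The Hamming ball of radius `r` in `F_2^n`. -/
def hamBall (n r : ℕ) : Finset (F2 n) := Finset.univ.filter fun x => hammingNorm x ≤ r

/-! ### Auxiliary material -/

section Aux

variable {n : ℕ}

lemma zmod2_cases (a : ZMod 2) : a = 0 ∨ a = 1 := by revert a; decide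

lemma stdBasis_self (i : Fin n) : stdBasis i i = 1 := Pi.single_eq_same i 1

lemma stdBasis_ne {i j : Fin n} (h : j ≠ i) : stdBasis i j = 0 := Pi.single_eq_of_ne h 1

lemma flip_flip' (i : Fin n) (x : F2 n) : x + stdBasis i + stdBasis i = x := by
  rw [add_assoc]
  have : stdBasis i + stdBasis i = (0 : F2 n) := by
    funext j; exact CharTwo.add_self_eq_zero _
  rw [this, add_zero]

lemma flip_apply_self (i : Fin n) (x : F2 n) : (x + stdBasis i) i = x i + 1 := by
  simp [stdBasis_self]

lemma flip_apply_ne (i : Fin n) (x : F2 n) {j : Fin n} (h : j ≠ i) :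
    (x + stdBasis i) j = x j := by
  simp [stdBasis_ne h]

lemma hammingNorm_flip_lt {i : Fin n} {x : F2 n} (h : x i = 1) :
    hammingNorm (x + stdBasis i) < hammingNorm x := by
  apply Finset.card_lt_card
  constructor
  · intro j hj
    simp only [mem_filter, mem_univ, true_and] at hj ⊢
    rcases eq_or_ne j i with rfl | hne
    · rw [flip_apply_self, h] at hj; exact absurd (by decide : (1:ZMod 2) + 1 = 0) hj
    · rwa [flip_apply_ne i x hne] at hj
  · intro hsub
    have := hsub (by simp [h] : i ∈ ({j | x j ≠ 0} : Finset (Fin n)))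
    simp only [mem_filter, mem_univ, true_and] at this
    rw [flip_apply_self, h] at this
    exact this (by decide : (1:ZMod 2) + 1 = 0)

/-- The down-compression of `A` in direction `i`. -/
def comp (i : Fin n) (A : Finset (F2 n)) : Finset (F2 n) :=
  (A.filter fun x => x i = 0 ∨ x + stdBasis i ∈ A) ∪
    ((A.filter fun x => x i = 1 ∧ x + stdBasis i ∉ A).image (· + stdBasis i))

lemma mem_comp {i : Fin n} {A : Finset (F2 n)} {x : F2 n} :
    x ∈ comp i A ↔
      (x i = 0 ∧ (x ∈ A ∨ x + stdBasis i ∈ A)) ∨ (x i = 1 ∧ x ∈ A ∧ x + stdBasis i ∈ A) := by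
  unfold comp
  simp only [mem_union, mem_filter, mem_image]
  constructor
  · rintro (⟨hxA, h0 | hf⟩ | ⟨z, ⟨hzA, hz1, hzf⟩, rfl⟩)
    · exact Or.inl ⟨h0, Or.inl hxA⟩
    · rcases zmod2_cases (x i) with h0 | h1
      · exact Or.inl ⟨h0, Or.inl hxA⟩
      · exact Or.inr ⟨h1, hxA, hf⟩
    · refine Or.inl ⟨?_, Or.inr ?_⟩
      · rw [flip_apply_self, hz1]; decide
      · rwa [flip_flip']
  · rintro (⟨h0, hxA | hf⟩ | ⟨h1, hxA, hf⟩)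
    · exact Or.inl ⟨hxA, Or.inl h0⟩
    · by_cases hx : x ∈ A
      · exact Or.inl ⟨hx, Or.inr hf⟩
      · refine Or.inr ⟨x + stdBasis i, ⟨hf, ?_, ?_⟩, flip_flip' i x⟩
        · rw [flip_apply_self, h0]; decide
        · rwa [flip_flip']
    · exact Or.inl ⟨hxA, Or.inr hf⟩

/-- The part of `A` that gets moved by the compression. -/
def movers (i : Fin n) (A : Finset (F2 n)) : Finset (F2 n) :=
  A.filter fun x => x i = 1 ∧ x + stdBasis i ∉ A

/-- The part of `A` that stays put. -/
def stayers (i : Fin n) (A : Finset (F2 n)) : Finset (F2 n) :=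
  A.filter fun x => x i = 0 ∨ x + stdBasis i ∈ A

lemma comp_eq (i : Fin n) (A : Finset (F2 n)) :
    comp i A = stayers i A ∪ (movers i A).image (· + stdBasis i) := rfl

lemma flip_injective (i : Fin n) : Function.Injective (· + stdBasis i) :=
  add_left_injective _

lemma disjoint_stayers_movers (i : Fin n) (A : Finset (F2 n)) :
    Disjoint (stayers i A) ((movers i A).image (· + stdBasis i)) := by
  rw [Finset.disjoint_left]
  rintro x hx hx'
  simp only [movers, mem_image, mem_filter] at hx'
  obtain ⟨z, ⟨hzA, hz1, hzf⟩, rfl⟩ := hx'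
  exact hzf (Finset.mem_of_mem_filter _ hx)

lemma movers_eq (i : Fin n) (A : Finset (F2 n)) :
    movers i A = A.filter fun x => ¬(x i = 0 ∨ x + stdBasis i ∈ A) := by
  apply Finset.filter_congr
  intro x _
  simp only [not_or]
  constructor
  · rintro ⟨h1, h2⟩; exact ⟨by rw [h1]; decide, h2⟩
  · rintro ⟨h1, h2⟩
    rcases zmod2_cases (x i) with h | h
    · exact absurd h h1
    · exact ⟨h, h2⟩

lemma stayers_card_add_movers_card (i : Fin n) (A : Finset (F2 n)) :
    (stayers i A).card + (movers i A).card = A.card := by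
  rw [stayers, movers_eq]
  exact Finset.card_filter_add_card_filter_not _

lemma card_comp (i : Fin n) (A : Finset (F2 n)) : (comp i A).card = A.card := by
  rw [comp_eq, Finset.card_union_of_disjoint (disjoint_stayers_movers i A),
    Finset.card_image_of_injective _ (flip_injective i),
    stayers_card_add_movers_card]

/-- Total weight of a finset, used as a termination measure. -/
def wt (A : Finset (F2 n)) : ℕ := ∑ a ∈ A, hammingNorm a

lemma wt_comp_le (i : Fin n) (A : Finset (F2 n)) : wt (comp i A) ≤ wt A := by
  rw [wt, comp_eq, Finset.sum_union (disjoint_stayers_movers i A),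
    Finset.sum_image (fun x _ y _ h => flip_injective i h)]
  have h1 : ∑ z ∈ movers i A, hammingNorm (z + stdBasis i) ≤ ∑ z ∈ movers i A, hammingNorm z :=
    Finset.sum_le_sum fun z hz =>
      le_of_lt (hammingNorm_flip_lt (Finset.mem_filter.mp hz).2.1)
  calc _ ≤ ∑ z ∈ stayers i A, hammingNorm z + ∑ z ∈ movers i A, hammingNorm z :=
        Nat.add_le_add_left h1 _
    _ = wt A := by
        rw [wt, stayers, movers_eq]
        exact Finset.sum_filter_add_sum_filter_not _ _ _

lemma wt_comp_lt {i : Fin n} {A : Finset (F2 n)} (h : (movers i A).Nonempty) :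
    wt (comp i A) < wt A := by
  rw [wt, comp_eq, Finset.sum_union (disjoint_stayers_movers i A),
    Finset.sum_image (fun x _ y _ hxy => flip_injective i hxy)]
  have h1 : ∑ z ∈ movers i A, hammingNorm (z + stdBasis i) < ∑ z ∈ movers i A, hammingNorm z :=
    Finset.sum_lt_sum_of_nonempty h fun z hz =>
      hammingNorm_flip_lt (Finset.mem_filter.mp hz).2.1
  calc _ < ∑ z ∈ stayers i A, hammingNorm z + ∑ z ∈ movers i A, hammingNorm z :=
        Nat.add_lt_add_left h1 _
    _ = wt A := by
        rw [wt, stayers, movers_eq]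
        exact Finset.sum_filter_add_sum_filter_not _ _ _

lemma stdBasis_add_self (i : Fin n) : stdBasis i + stdBasis i = (0 : F2 n) := by
  funext j; exact CharTwo.add_self_eq_zero _

lemma add_flip_add_flip (i : Fin n) (a b : F2 n) :
    (a + stdBasis i) + (b + stdBasis i) = a + b := by
  rw [add_add_add_comm, stdBasis_add_self, add_zero]

lemma mem_ball_iff {r : ℕ} {x : F2 n} : x ∈ hamBall n r ↔ hammingNorm x ≤ r := by
  simp [hamBall]

lemma comp_subset_ball {r : ℕ} {i : Fin n} {A : Finset (F2 n)} (hA : A ⊆ hamBall n r) :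
    comp i A ⊆ hamBall n r := by
  intro x hx
  rw [mem_comp] at hx
  rw [mem_ball_iff]
  rcases hx with ⟨h0, hxA | hf⟩ | ⟨_, hxA, _⟩
  · exact mem_ball_iff.mp (hA hxA)
  · have h1 : (x + stdBasis i) i = 1 := by rw [flip_apply_self, h0, zero_add]
    have := hammingNorm_flip_lt h1
    rw [flip_flip'] at this
    exact le_of_lt (lt_of_lt_of_le this (mem_ball_iff.mp (hA hf)))
  · exact mem_ball_iff.mp (hA hxA)

lemma exists_movers_of_not_downset {A : Finset (F2 n)} (h : ¬ IsDownset A) :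
    ∃ i, (movers i A).Nonempty := by
  unfold IsDownset at h
  push_neg at h
  obtain ⟨x, i, h0, hxe, hxA⟩ := h
  refine ⟨i, x + stdBasis i, Finset.mem_filter.mpr ⟨hxe, ?_, ?_⟩⟩
  · rw [flip_apply_self, h0, zero_add]
  · rwa [flip_flip']

lemma isDownset_of_movers {A : Finset (F2 n)} (h : ∀ i, movers i A = ∅) : IsDownset A := by
  intro x i h0 hxe
  by_contra hx
  have : x + stdBasis i ∈ movers i A := by
    refine Finset.mem_filter.mpr ⟨hxe, ?_, ?_⟩
    · rw [flip_apply_self, h0, zero_add]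
    · rwa [flip_flip']
  rw [h i] at this
  exact absurd this (Finset.notMem_empty _)

/-! ### The compression does not increase the sumset -/

def lvl0 (i : Fin n) (S : Finset (F2 n)) : Finset (F2 n) := S.filter (· i = 0)

def lvl1 (i : Fin n) (S : Finset (F2 n)) : Finset (F2 n) :=
  (S.filter (· i = 1)).image (· + stdBasis i)

lemma mem_lvl0 {i : Fin n} {S : Finset (F2 n)} {x : F2 n} :
    x ∈ lvl0 i S ↔ x ∈ S ∧ x i = 0 := by simp [lvl0]

lemma mem_lvl1 {i : Fin n} {S : Finset (F2 n)} {x : F2 n} :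
    x ∈ lvl1 i S ↔ x + stdBasis i ∈ S ∧ x i = 0 := by
  simp only [lvl1, mem_image, mem_filter]
  constructor
  · rintro ⟨z, ⟨hz, hz1⟩, rfl⟩
    refine ⟨by rwa [flip_flip'], ?_⟩
    rcases zmod2_cases (z i) with h | h
    · rw [h] at hz1; exact absurd hz1 (by decide)
    · rw [flip_apply_self, h]; decide
  · rintro ⟨hz, h0⟩
    exact ⟨x + stdBasis i, ⟨hz, by rw [flip_apply_self, h0, zero_add]⟩, flip_flip' i x⟩

lemma card_lvl (i : Fin n) (S : Finset (F2 n)) :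
    (lvl0 i S).card + (lvl1 i S).card = S.card := by
  rw [lvl0, lvl1, Finset.card_image_of_injective _ (flip_injective i)]
  have : (S.filter (· i = 1)) = S.filter fun x => ¬ x i = 0 := by
    apply Finset.filter_congr
    intro x _
    constructor
    · intro h1; rw [h1]; decide
    · intro h1
      rcases zmod2_cases (x i) with h | h
      · exact absurd h h1
      · exact h
  rw [this]
  exact Finset.card_filter_add_card_filter_not _

lemma card_comp_add_le (i : Fin n) (A B : Finset (F2 n)) :
    (comp i A + comp i B).card ≤ (A + B).card := by
  have key0 : lvl0 i (comp i A + comp i B) ⊆ lvl0 i (A + B) ∪ lvl1 i (A + B) := by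
    intro x hx
    rw [mem_lvl0] at hx
    obtain ⟨hxT, hx0⟩ := hx
    rw [Finset.mem_add] at hxT
    obtain ⟨a, ha, b, hb, hab⟩ := hxT
    rw [mem_comp] at ha hb
    rw [Finset.mem_union, mem_lvl0, mem_lvl1]
    have hxi : a i + b i = 0 := by rw [← hx0, ← hab]; rfl
    rcases zmod2_cases (a i) with ha0 | ha1
    · have hb0 : b i = 0 := by rwa [ha0, zero_add] at hxi
      have ha' : a ∈ A ∨ a + stdBasis i ∈ A := by
        rcases ha with ⟨_, h⟩ | ⟨h, _⟩
        · exact h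
        · rw [ha0] at h; exact absurd h (by decide)
      have hb' : b ∈ B ∨ b + stdBasis i ∈ B := by
        rcases hb with ⟨_, h⟩ | ⟨h, _⟩
        · exact h
        · rw [hb0] at h; exact absurd h (by decide)
      rcases ha' with haA | haA <;> rcases hb' with hbB | hbB
      · exact Or.inl ⟨hab ▸ Finset.add_mem_add haA hbB, hx0⟩
      · refine Or.inr ⟨?_, hx0⟩
        have : a + (b + stdBasis i) = x + stdBasis i := by rw [← hab, add_assoc]
        exact this ▸ Finset.add_mem_add haA hbB
      · refine Or.inr ⟨?_, hx0⟩
        have : (a + stdBasis i) + b = x + stdBasis i := by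
          rw [← hab, add_right_comm]
        exact this ▸ Finset.add_mem_add haA hbB
      · refine Or.inl ⟨?_, hx0⟩
        have : (a + stdBasis i) + (b + stdBasis i) = x := by
          rw [add_flip_add_flip, hab]
        exact this ▸ Finset.add_mem_add haA hbB
    · have hb1 : b i = 1 := by
        rcases zmod2_cases (b i) with h | h
        · rw [ha1, h, add_zero] at hxi; exact absurd hxi (by decide)
        · exact h
      have ha' : a ∈ A := by
        rcases ha with ⟨h, _⟩ | ⟨_, h, _⟩
        · rw [ha1] at h; exact absurd h (by decide)
        · exact h
      have hb' : b ∈ B := by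
        rcases hb with ⟨h, _⟩ | ⟨_, h, _⟩
        · rw [hb1] at h; exact absurd h (by decide)
        · exact h
      exact Or.inl ⟨hab ▸ Finset.add_mem_add ha' hb', hx0⟩
  have key1 : lvl1 i (comp i A + comp i B) ⊆ lvl0 i (A + B) ∩ lvl1 i (A + B) := by
    intro x hx
    rw [mem_lvl1] at hx
    obtain ⟨hxT, hx0⟩ := hx
    rw [Finset.mem_add] at hxT
    obtain ⟨a, ha, b, hb, hab⟩ := hxT
    rw [mem_comp] at ha hb
    rw [Finset.mem_inter, mem_lvl0, mem_lvl1]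
    have hxi : a i + b i = 1 := by
      have : (x + stdBasis i) i = 1 := by rw [flip_apply_self, hx0, zero_add]
      rw [← this, ← hab]; rfl
    have main : x ∈ A + B ∧ x + stdBasis i ∈ A + B := by
      rcases zmod2_cases (a i) with ha0 | ha1
      · have hb1 : b i = 1 := by rwa [ha0, zero_add] at hxi
        have hb' : b ∈ B ∧ b + stdBasis i ∈ B := by
          rcases hb with ⟨h, _⟩ | ⟨_, h⟩
          · rw [hb1] at h; exact absurd h (by decide)
          · exact h
        have ha' : a ∈ A ∨ a + stdBasis i ∈ A := by
          rcases ha with ⟨_, h⟩ | ⟨h, _⟩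
          · exact h
          · rw [ha0] at h; exact absurd h (by decide)
        rcases ha' with haA | haA
        · constructor
          · have : a + (b + stdBasis i) = x := by
              rw [← add_assoc, hab, flip_flip']
            exact this ▸ Finset.add_mem_add haA hb'.2
          · exact hab ▸ Finset.add_mem_add haA hb'.1
        · constructor
          · have : (a + stdBasis i) + b = x := by
              rw [add_right_comm, hab, flip_flip']
            exact this ▸ Finset.add_mem_add haA hb'.1
          · have : (a + stdBasis i) + (b + stdBasis i) = x + stdBasis i := by
              rw [add_flip_add_flip, hab]
            exact this ▸ Finset.add_mem_add haA hb'.2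
      · have hb0 : b i = 0 := by
          rcases zmod2_cases (b i) with h | h
          · exact h
          · rw [ha1, h] at hxi; exact absurd hxi (by decide)
        have ha' : a ∈ A ∧ a + stdBasis i ∈ A := by
          rcases ha with ⟨h, _⟩ | ⟨_, h⟩
          · rw [ha1] at h; exact absurd h (by decide)
          · exact h
        have hb' : b ∈ B ∨ b + stdBasis i ∈ B := by
          rcases hb with ⟨_, h⟩ | ⟨h, _⟩
          · exact h
          · rw [hb0] at h; exact absurd h (by decide)
        rcases hb' with hbB | hbB
        · constructor
          · have : (a + stdBasis i) + b = x := by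
              rw [add_right_comm, hab, flip_flip']
            exact this ▸ Finset.add_mem_add ha'.2 hbB
          · exact hab ▸ Finset.add_mem_add ha'.1 hbB
        · constructor
          · have : a + (b + stdBasis i) = x := by
              rw [← add_assoc, hab, flip_flip']
            exact this ▸ Finset.add_mem_add ha'.1 hbB
          · have : (a + stdBasis i) + (b + stdBasis i) = x + stdBasis i := by
              rw [add_flip_add_flip, hab]
            exact this ▸ Finset.add_mem_add ha'.2 hbB
    exact ⟨⟨main.1, hx0⟩, main.2, hx0⟩
  calc (comp i A + comp i B).card
      = (lvl0 i (comp i A + comp i B)).card + (lvl1 i (comp i A + comp i B)).card :=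
        (card_lvl _ _).symm
    _ ≤ (lvl0 i (A + B) ∪ lvl1 i (A + B)).card + (lvl0 i (A + B) ∩ lvl1 i (A + B)).card :=
        Nat.add_le_add (Finset.card_le_card key0) (Finset.card_le_card key1)
    _ = (lvl0 i (A + B)).card + (lvl1 i (A + B)).card :=
        Finset.card_union_add_card_inter _ _
    _ = (A + B).card := card_lvl _ _

/-! ### Downsets -/

lemma downset_closed_aux {A : Finset (F2 n)} (hA : IsDownset A) :
    ∀ m : ℕ, ∀ x y : F2 n, (Finset.univ.filter fun j => y j ≠ x j).card ≤ m →
      x ∈ A → (∀ j, x j = 0 → y j = 0) → y ∈ A := by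
  intro m
  induction m with
  | zero =>
    intro x y hc hx h
    have : y = x := by
      funext j
      by_contra hj
      have : j ∈ Finset.univ.filter fun j => y j ≠ x j := by simp [hj]
      have := Finset.card_pos.mpr ⟨j, this⟩
      omega
    exact this ▸ hx
  | succ m ih =>
    intro x y hc hx h
    by_cases hD : (Finset.univ.filter fun j => y j ≠ x j) = ∅
    · have : y = x := by
        funext j
        by_contra hj
        have : j ∈ Finset.univ.filter fun j => y j ≠ x j := by simp [hj]
        rw [hD] at this
        exact absurd this (Finset.notMem_empty _)
      exact this ▸ hx
    · obtain ⟨j, hj⟩ := Finset.nonempty_of_ne_empty hD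
      simp only [Finset.mem_filter, Finset.mem_univ, true_and] at hj
      have hxj : x j = 1 := by
        rcases zmod2_cases (x j) with h0 | h1
        · exact absurd (by rw [h j h0, h0]) hj
        · exact h1
      have hyj : y j = 0 := by
        rcases zmod2_cases (y j) with h0 | h1
        · exact h0
        · rw [h1, hxj] at hj; exact absurd rfl hj
      have hx' : x + stdBasis j ∈ A := by
        apply hA (x + stdBasis j) j
        · rw [flip_apply_self, hxj]; decide
        · rwa [flip_flip']
      refine ih (x + stdBasis j) y ?_ hx' ?_
      · have hsub : (Finset.univ.filter fun k => y k ≠ (x + stdBasis j) k) ⊆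
            (Finset.univ.filter fun k => y k ≠ x k).erase j := by
          intro k hk
          simp only [Finset.mem_filter, Finset.mem_univ, true_and] at hk
          rcases eq_or_ne k j with rfl | hkj
          · rw [flip_apply_self, hxj] at hk
            exact absurd (by rw [hyj]; decide) hk
          · rw [flip_apply_ne _ _ hkj] at hk
            exact Finset.mem_erase.mpr ⟨hkj, by simp [hk]⟩
        have hmem : j ∈ Finset.univ.filter fun k => y k ≠ x k := by simp [hj]
        have := Finset.card_le_card hsub
        rw [Finset.card_erase_of_mem hmem] at this
        have hpos := Finset.card_pos.mpr ⟨j, hmem⟩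
        omega
      · intro k hk
        rcases eq_or_ne k j with rfl | hkj
        · exact hyj
        · rw [flip_apply_ne _ _ hkj] at hk
          exact h k hk

lemma downset_mem {A : Finset (F2 n)} (hA : IsDownset A) {x y : F2 n} (hx : x ∈ A)
    (h : ∀ j, x j = 0 → y j = 0) : y ∈ A :=
  downset_closed_aux hA _ x y le_rfl hx h

/-- Coordinatewise OR. -/
def orv (a b : F2 n) : F2 n := a + b + a * b

lemma orv_apply (a b : F2 n) (j : Fin n) : orv a b j = a j + b j + a j * b j := rfl

lemma orv_eq_zero {a b : F2 n} {j : Fin n} : orv a b j = 0 ↔ a j = 0 ∧ b j = 0 := by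
  rw [orv_apply]
  rcases zmod2_cases (a j) with h | h <;> rcases zmod2_cases (b j) with h' | h' <;>
    simp [h, h'] <;> decide

lemma orv_mem_add {A B : Finset (F2 n)} (hA : IsDownset A) {a b : F2 n}
    (ha : a ∈ A) (hb : b ∈ B) : orv a b ∈ A + B := by
  have ha' : orv a b + b ∈ A := by
    apply downset_mem hA ha
    intro j hj
    rw [Pi.add_apply, orv_apply, hj]
    rcases zmod2_cases (b j) with h' | h' <;> rw [h'] <;> decide
  have : (orv a b + b) + b = orv a b := by
    rw [add_assoc]
    have : b + b = (0 : F2 n) := by funext j; exact CharTwo.add_self_eq_zero _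
    rw [this, add_zero]
  rw [Finset.mem_add]
  exact ⟨_, ha', b, hb, this⟩

lemma hammingNorm_orv_le (a b : F2 n) :
    hammingNorm (orv a b) ≤ hammingNorm a + hammingNorm b := by
  unfold hammingNorm
  calc _ ≤ ((Finset.univ.filter fun j => a j ≠ 0) ∪ (Finset.univ.filter fun j => b j ≠ 0)).card := by
        apply Finset.card_le_card
        intro j hj
        simp only [Finset.mem_filter, Finset.mem_union, Finset.mem_univ, true_and] at hj ⊢
        by_contra hcon
        push_neg at hcon
        exact hj (orv_eq_zero.mpr hcon)
    _ ≤ _ := Finset.card_union_le _ _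

/-- Fiber of the OR map has size at most `3 ^ hammingNorm c`. -/
lemma fiber_card_le (A B : Finset (F2 n)) (c : F2 n) :
    ((A ×ˢ B).filter fun p => orv p.1 p.2 = c).card ≤ 3 ^ hammingNorm c := by
  classical
  have : 3 ^ hammingNorm c = Fintype.card ({j : Fin n // c j ≠ 0} → Fin 3) := by
    rw [Fintype.card_fun, Fintype.card_fin, Fintype.card_subtype, hammingNorm]
  rw [this]
  rw [← Finset.card_univ]
  apply Finset.card_le_card_of_injOn
    (fun p => fun j => if p.1 j.1 = 1 then (if p.2 j.1 = 1 then 2 else 1) else 0)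
  · intro _ _; exact Finset.mem_univ _
  · intro p hp q hq hfg
    simp only [Finset.coe_filter, Set.mem_setOf_eq, Finset.mem_product] at hp hq
    have hzero : ∀ (u : F2 n × F2 n), orv u.1 u.2 = c → ∀ j, c j = 0 → u.1 j = 0 ∧ u.2 j = 0 :=
      fun u hu j hj => orv_eq_zero.mp (by rw [hu]; exact hj)
    have heq : ∀ j : Fin n, p.1 j = q.1 j ∧ p.2 j = q.2 j := by
      intro j
      by_cases hj : c j = 0
      · obtain ⟨h1, h2⟩ := hzero p hp.2 j hj
        obtain ⟨h3, h4⟩ := hzero q hq.2 j hj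
        rw [h1, h2, h3, h4]; exact ⟨rfl, rfl⟩
      · have this : (if p.1 j = 1 then (if p.2 j = 1 then (2 : Fin 3) else 1) else 0)
            = (if q.1 j = 1 then (if q.2 j = 1 then (2 : Fin 3) else 1) else 0) :=
          congrFun hfg ⟨j, hj⟩
        have hpj : ¬(p.1 j = 0 ∧ p.2 j = 0) := fun hcon =>
          hj (by rw [← hp.2]; exact orv_eq_zero.mpr hcon)
        have hqj : ¬(q.1 j = 0 ∧ q.2 j = 0) := fun hcon =>
          hj (by rw [← hq.2]; exact orv_eq_zero.mpr hcon)
        rcases zmod2_cases (p.1 j) with ha | ha <;> rcases zmod2_cases (p.2 j) with hb | hb <;>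
          rcases zmod2_cases (q.1 j) with hc | hc <;> rcases zmod2_cases (q.2 j) with hd | hd <;>
          simp [ha, hb, hc, hd] at this hpj hqj ⊢
    have h1 : p.1 = q.1 := funext fun j => (heq j).1
    have h2 : p.2 = q.2 := funext fun j => (heq j).2
    exact Prod.ext h1 h2

/-- The counting bound for downsets. -/
lemma downset_bound {r : ℕ} {A B : Finset (F2 n)} (hA : A ⊆ hamBall n r) (hB : B ⊆ hamBall n r)
    (hdA : IsDownset A) :
    A.card * B.card ≤ 9 ^ r * (A + B).card := by
  classical
  have h9 : (9 : ℕ) ^ r = 3 ^ (2 * r) := by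
    rw [pow_mul]; norm_num
  calc A.card * B.card = (A ×ˢ B).card := (Finset.card_product _ _).symm
    _ ≤ 9 ^ r * (A + B).card := by
        rw [h9]
        apply Finset.card_le_mul_card_image_of_maps_to (f := fun p => orv p.1 p.2)
        · rintro ⟨a, b⟩ hab
          rw [Finset.mem_product] at hab
          exact orv_mem_add hdA hab.1 hab.2
        · intro c hc
          rw [Finset.mem_add] at hc
          obtain ⟨a, ha, b, hb, hab⟩ := hc
          by_cases hfib : ((A ×ˢ B).filter fun p => orv p.1 p.2 = c).Nonempty
          · obtain ⟨⟨a', b'⟩, hp⟩ := hfib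
            simp only [Finset.mem_filter, Finset.mem_product] at hp
            have hnorm : hammingNorm c ≤ 2 * r := by
              rw [← hp.2]
              calc hammingNorm (orv a' b') ≤ hammingNorm a' + hammingNorm b' :=
                    hammingNorm_orv_le _ _
                _ ≤ 2 * r := by
                    have h1 := mem_ball_iff.mp (hA hp.1.1)
                    have h2 := mem_ball_iff.mp (hB hp.1.2)
                    omega
            calc _ ≤ 3 ^ hammingNorm c := fiber_card_le A B c
              _ ≤ 3 ^ (2 * r) := Nat.pow_le_pow_right (by norm_num) hnorm
          · rw [Finset.not_nonempty_iff_eq_empty] at hfib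
            rw [hfib]
            simp

/-! ### Main induction -/

lemma key_bound {r : ℕ} (N : ℕ) : ∀ A B : Finset (F2 n), wt A + wt B ≤ N →
    A ⊆ hamBall n r → B ⊆ hamBall n r → A.card * B.card ≤ 9 ^ r * (A + B).card := by
  induction N using Nat.strong_induction_on with
  | _ N ih =>
    intro A B hN hA hB
    by_cases hd : IsDownset A ∧ IsDownset B
    · exact downset_bound hA hB hd.1
    · have hex : ∃ i : Fin n, (movers i A).Nonempty ∨ (movers i B).Nonempty := by
        rcases not_and_or.mp hd with h | h
        · obtain ⟨i, hi⟩ := exists_movers_of_not_downset h; exact ⟨i, Or.inl hi⟩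
        · obtain ⟨i, hi⟩ := exists_movers_of_not_downset h; exact ⟨i, Or.inr hi⟩
      obtain ⟨i, hi⟩ := hex
      have hlt : wt (comp i A) + wt (comp i B) < wt A + wt B := by
        rcases hi with hi | hi
        · exact Nat.add_lt_add_of_lt_of_le (wt_comp_lt hi) (wt_comp_le i B)
        · exact Nat.add_lt_add_of_le_of_lt (wt_comp_le i A) (wt_comp_lt hi)
      have hrec := ih _ (lt_of_lt_of_le hlt hN) (comp i A) (comp i B) le_rfl
        (comp_subset_ball hA) (comp_subset_ball hB)
      rw [card_comp, card_comp] at hrec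
      exact hrec.trans (Nat.mul_le_mul_left _ (card_comp_add_le i A B))

end Aux

/-- Expansion in Hamming balls (Proposition 3.1): if `A, B ⊆ H_r(n)` then
`|A + B| ≥ 9^{-r} |A| |B|`. -/
theorem expansion_in_hamming_ball (n r : ℕ) (A B : Finset (F2 n))
    (hA : A ⊆ hamBall n r) (hB : B ⊆ hamBall n r) :
    (9 : ℝ) ^ (-(r : ℤ)) * A.card * B.card ≤ ((A + B).card : ℝ) := by
  have hnat : A.card * B.card ≤ 9 ^ r * (A + B).card :=
    key_bound (wt A + wt B) A B le_rfl hA hB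
  have h9 : (0 : ℝ) < 9 ^ r := by positivity
  rw [zpow_neg, zpow_natCast, mul_assoc, inv_mul_le_iff₀ h9]
  calc (A.card : ℝ) * B.card = ((A.card * B.card : ℕ) : ℝ) := by push_cast; ring
    _ ≤ ((9 ^ r * (A + B).card : ℕ) : ℝ) := by exact_mod_cast hnat
    _ = 9 ^ r * ((A + B).card : ℝ) := by push_cast; ring
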